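/- arXiv:2604.19724 — 3 statements merged into one kernel-verified Lean document; each statement's English description precedes it below -/
import Mathlib

section
/- Let ι be a nonempty finite index set with cardinality M, let δ ≥ 0, and let a : ι → ℝ satisfy |a i| ≤ δ for every i ∈ ι. Then for every i ∈ ι, exp(−δ)/(exp(−δ) + (M − 1)·exp(δ)) ≤ exp(a i) / Σ_{j ∈ ι} exp(a j) ≤ exp(δ)/(exp(δ) + (M − 1)·exp(−δ)). -/
open Real Finset

/-- Softmax bound: if all logits satisfy `|a i| ≤ δ`, then every softmax weight
lies between `exp(-δ)/(exp(-δ) + (M-1)·exp δ)` and `exp δ/(exp δ + (M-1)·exp(-δ))`,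
where `M` is the number of indices. -/
theorem softmax_weight_bounds {ι : Type*} [Fintype ι] [Nonempty ι]
    (δ : ℝ) (hδ : 0 ≤ δ) (a : ι → ℝ) (ha : ∀ i, |a i| ≤ δ) (i : ι) :
    Real.exp (-δ) / (Real.exp (-δ) + ((Fintype.card ι : ℝ) - 1) * Real.exp δ)
        ≤ Real.exp (a i) / ∑ j, Real.exp (a j) ∧
    Real.exp (a i) / ∑ j, Real.exp (a j)
        ≤ Real.exp δ / (Real.exp δ + ((Fintype.card ι : ℝ) - 1) * Real.exp (-δ)) := by
  classical
  have hlo : ∀ j, Real.exp (-δ) ≤ Real.exp (a j) := fun j =>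
    Real.exp_le_exp.2 (neg_le_of_abs_le (ha j))
  have hhi : ∀ j, Real.exp (a j) ≤ Real.exp δ := fun j =>
    Real.exp_le_exp.2 (le_of_abs_le (ha j))
  have hcard : ((univ : Finset ι).erase i).card = Fintype.card ι - 1 := by
    simp [Finset.card_erase_of_mem]
  have hM1 : (1 : ℕ) ≤ Fintype.card ι := Fintype.card_pos
  have hcardR : (((univ : Finset ι).erase i).card : ℝ) = (Fintype.card ι : ℝ) - 1 := by
    rw [hcard, Nat.cast_sub hM1, Nat.cast_one]
  set R := ∑ j ∈ (univ : Finset ι).erase i, Real.exp (a j) with hR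
  have hsplit : (∑ j, Real.exp (a j)) = Real.exp (a i) + R := by
    rw [hR, ← Finset.add_sum_erase _ _ (Finset.mem_univ i)]
  have hRle : R ≤ ((Fintype.card ι : ℝ) - 1) * Real.exp δ := by
    calc R ≤ ((univ : Finset ι).erase i).card • Real.exp δ :=
          Finset.sum_le_card_nsmul _ _ _ (fun j _ => hhi j)
      _ = ((Fintype.card ι : ℝ) - 1) * Real.exp δ := by
          rw [nsmul_eq_mul, hcardR]
  have hRge : ((Fintype.card ι : ℝ) - 1) * Real.exp (-δ) ≤ R := by
    calc ((Fintype.card ι : ℝ) - 1) * Real.exp (-δ)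
        = ((univ : Finset ι).erase i).card • Real.exp (-δ) := by rw [nsmul_eq_mul, hcardR]
      _ ≤ R := Finset.card_nsmul_le_sum _ _ _ (fun j _ => hlo j)
  have hRpos : 0 ≤ R := Finset.sum_nonneg fun j _ => (Real.exp_pos _).le
  have hSpos : 0 < Real.exp (a i) + R := by positivity
  have hM1R : 0 ≤ (Fintype.card ι : ℝ) - 1 := by
    have : (1 : ℝ) ≤ (Fintype.card ι : ℝ) := by exact_mod_cast hM1
    linarith
  have hD1 : 0 < Real.exp (-δ) + ((Fintype.card ι : ℝ) - 1) * Real.exp δ := by positivity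
  have hD2 : 0 < Real.exp δ + ((Fintype.card ι : ℝ) - 1) * Real.exp (-δ) := by positivity
  rw [hsplit]
  constructor
  · rw [div_le_div_iff₀ hD1 hSpos]
    have h1 : Real.exp (-δ) * R ≤ Real.exp (a i) * (((Fintype.card ι : ℝ) - 1) * Real.exp δ) :=
      mul_le_mul (hlo i) hRle hRpos (Real.exp_pos _).le
    nlinarith [hlo i, Real.exp_pos (-δ), Real.exp_pos (a i)]
  · rw [div_le_div_iff₀ hSpos hD2]
    have h1 : Real.exp (a i) * (((Fintype.card ι : ℝ) - 1) * Real.exp (-δ)) ≤ Real.exp δ * R :=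
      mul_le_mul (hhi i) hRge (by positivity) (Real.exp_pos _).le
    nlinarith [hhi i, Real.exp_pos δ, Real.exp_pos (a i)]
end

section
/- Let ι be a nonempty finite index set, let ε ≥ 0, and let a, b : ι → ℝ satisfy |a i − b i| ≤ ε for every i ∈ ι. Then for every i ∈ ι, exp(a i) / Σ_{j ∈ ι} exp(a j) ≤ exp(2ε) · exp(b i) / Σ_{j ∈ ι} exp(b j). -/
open Real Finset

/-- Softmax robustness: if each logit changes by at most `ε`, then each softmax
weight changes by a multiplicative factor of at most `exp (2ε)`. -/
theorem softmax_perturbation_ratio {ι : Type*} [Fintype ι] [Nonempty ι]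
    (ε : ℝ) (hε : 0 ≤ ε) (a b : ι → ℝ) (hab : ∀ i, |a i - b i| ≤ ε) (i : ι) :
    Real.exp (a i) / ∑ j, Real.exp (a j)
        ≤ Real.exp (2 * ε) * (Real.exp (b i) / ∑ j, Real.exp (b j)) := by
  have hsa : 0 < ∑ j, Real.exp (a j) :=
    Finset.sum_pos (fun j _ => Real.exp_pos _) Finset.univ_nonempty
  have hsb : 0 < ∑ j, Real.exp (b j) :=
    Finset.sum_pos (fun j _ => Real.exp_pos _) Finset.univ_nonempty
  have h1 : Real.exp (a i) ≤ Real.exp ε * Real.exp (b i) := by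
    rw [← Real.exp_add]
    apply Real.exp_le_exp.mpr
    have := (abs_le.mp (hab i)).2
    linarith
  have h2 : ∑ j, Real.exp (b j) ≤ Real.exp ε * ∑ j, Real.exp (a j) := by
    rw [Finset.mul_sum]
    apply Finset.sum_le_sum
    intro j _
    rw [← Real.exp_add]
    apply Real.exp_le_exp.mpr
    have := (abs_le.mp (hab j)).1
    linarith
  rw [← mul_div_assoc, div_le_div_iff₀ hsa hsb]
  have h3 : Real.exp (2 * ε) = Real.exp ε * Real.exp ε := by
    rw [← Real.exp_add]; ring_nf
  rw [h3]
  calc Real.exp (a i) * ∑ j, Real.exp (b j)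
      ≤ (Real.exp ε * Real.exp (b i)) * (Real.exp ε * ∑ j, Real.exp (a j)) :=
        mul_le_mul h1 h2 (le_of_lt hsb) (by positivity)
    _ = Real.exp ε * Real.exp ε * Real.exp (b i) * ∑ j, Real.exp (a j) := by ring
end

section
/- Let M ≥ 1, τ ≥ 0, and μ₊, μ₋ ∈ ℝ^d with ‖μ₊‖ ≤ τ and ‖μ₋‖ ≤ τ. Let ν be a probability measure on the space of token families (Fin M → ℝ^d), and let f : (Fin M → ℝ^d) → ℝ. For a token family ξ, let X₊(ξ) be ξ with its token at index 0 replaced by μ₊, and X₋(ξ) be ξ with its token at index 0 replaced by μ₋. Define A₊ = { ξ : ∃ X̃, (∀ m, ‖X̃(m) − X₊(ξ)(m)‖ ≤ τ) ∧ f(X̃) ≤ 0 } and A₋ = { ξ : ∃ X̃, (∀ m, ‖X̃(m) − X₋(ξ)(m)‖ ≤ τ) ∧ f(X̃) ≥ 0 }. If A₊ and A₋ are ν-measurable, then (1/2)·ν(A₊) + (1/2)·ν(A₋) ≥ 1/4. -/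
open MeasureTheory

/-- Large-perturbation robust-error lower bound (paper's Theorem 2): if both
signal tokens have norm at most `τ`, then for any classifier `f` and any noise
distribution `ν`, the robust test error `(1/2)·ν(A₊) + (1/2)·ν(A₋)` is at
least `1/4`. -/
theorem robust_error_lower_bound (d M : ℕ) (hM : 1 ≤ M) (τ : ℝ) (hτ : 0 ≤ τ)
    (μp μm : EuclideanSpace ℝ (Fin d)) (hμp : ‖μp‖ ≤ τ) (hμm : ‖μm‖ ≤ τ)
    (ν : Measure (Fin M → EuclideanSpace ℝ (Fin d))) [IsProbabilityMeasure ν]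
    (f : (Fin M → EuclideanSpace ℝ (Fin d)) → ℝ)
    (Ap Am : Set (Fin M → EuclideanSpace ℝ (Fin d)))
    (hAp : Ap = {ξ : Fin M → EuclideanSpace ℝ (Fin d) |
        ∃ Xt : Fin M → EuclideanSpace ℝ (Fin d),
          (∀ m, ‖Xt m - Function.update ξ ⟨0, hM⟩ μp m‖ ≤ τ) ∧ f Xt ≤ 0})
    (hAm : Am = {ξ : Fin M → EuclideanSpace ℝ (Fin d) |
        ∃ Xt : Fin M → EuclideanSpace ℝ (Fin d),
          (∀ m, ‖Xt m - Function.update ξ ⟨0, hM⟩ μm m‖ ≤ τ) ∧ 0 ≤ f Xt})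
    (hApm : MeasurableSet Ap) (hAmm : MeasurableSet Am) :
    (1 : ENNReal) / 4 ≤ (1 : ENNReal) / 2 * ν Ap + (1 : ENNReal) / 2 * ν Am := by
  have hcover : Ap ∪ Am = Set.univ := by
    ext ξ
    simp only [Set.mem_union, Set.mem_univ, iff_true, hAp, hAm, Set.mem_setOf_eq]
    set Xt := Function.update ξ ⟨0, hM⟩ (0 : EuclideanSpace ℝ (Fin d)) with hXt
    have key : ∀ μ : EuclideanSpace ℝ (Fin d), ‖μ‖ ≤ τ →
        ∀ m, ‖Xt m - Function.update ξ ⟨0, hM⟩ μ m‖ ≤ τ := by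
      intro μ hμ m
      by_cases hm : m = ⟨0, hM⟩
      · subst hm
        simp [hXt, Function.update_self, hμ]
      · simp [hXt, Function.update_of_ne hm, hτ]
    rcases le_or_gt (f Xt) 0 with h | h
    · exact Or.inl ⟨Xt, key μp hμp, h⟩
    · exact Or.inr ⟨Xt, key μm hμm, h.le⟩
  have h1 : (1 : ENNReal) ≤ ν Ap + ν Am := by
    calc (1 : ENNReal) = ν Set.univ := (measure_univ).symm
    _ = ν (Ap ∪ Am) := by rw [hcover]
    _ ≤ ν Ap + ν Am := measure_union_le _ _
  have h2 : (1 : ENNReal) / 2 * 1 ≤ (1 : ENNReal) / 2 * (ν Ap + ν Am) :=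
    mul_le_mul_right h1 _
  rw [mul_add] at h2
  calc (1 : ENNReal) / 4 ≤ (1 : ENNReal) / 2 * 1 := by norm_num
  _ ≤ _ := h2
end
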